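/- For every positive natural number n, the number of regular elements of Z_n equals the sum of Euler's totient function φ(d) over all unitary divisors d of n, i.e., ϱ(n) = Σ_{d ∥ n} φ(d). -/

import Mathlib

/-- An element `m` of `ZMod n` is regular if `m^2 * x = m` for some `x`. -/
def IsRegularElem {n : ℕ} (m : ZMod n) : Prop := ∃ x : ZMod n, m ^ 2 * x = m

/-- `ϱ n` is the number of regular elements of `ZMod n`. -/
noncomputable def rho (n : ℕ) : ℕ := Nat.card {m : ZMod n // IsRegularElem m}

/-- `d` is a unitary divisor of `n`. -/
def UnitaryDivisor (d n : ℕ) : Prop := 0 < d ∧ d ∣ n ∧ Nat.gcd d (n / d) = 1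

lemma isRegular_iff_int (n : ℕ) (hn : 0 < n) (m : ℕ) :
    IsRegularElem (m : ZMod n) ↔ ∃ X : ℤ, (n : ℤ) ∣ (m : ℤ) * ((m : ℤ) * X - 1) := by
  haveI : NeZero n := ⟨hn.ne'⟩
  constructor
  · rintro ⟨x, hx⟩
    refine ⟨(x.val : ℤ), ?_⟩
    rw [← ZMod.intCast_zmod_eq_zero_iff_dvd]
    push_cast
    rw [ZMod.natCast_val, ZMod.cast_id]
    linear_combination hx
  · rintro ⟨X, hX⟩
    refine ⟨(X : ZMod n), ?_⟩
    have h0 : ((((m : ℤ) * ((m : ℤ) * X - 1)) : ℤ) : ZMod n) = 0 := by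
      rw [ZMod.intCast_zmod_eq_zero_iff_dvd]; exact_mod_cast hX
    push_cast at h0
    rw [mul_sub, mul_one, sub_eq_zero] at h0
    linear_combination h0

lemma isRegular_iff_unitary (n : ℕ) (hn : 0 < n) (m : ℕ) :
    IsRegularElem (m : ZMod n) ↔ UnitaryDivisor (n.gcd m) n := by
  rw [isRegular_iff_int n hn]
  set g := n.gcd m with hg
  have hgdvdn : g ∣ n := Nat.gcd_dvd_left n m
  have hgm : g ∣ m := Nat.gcd_dvd_right n m
  have hgpos : 0 < g := Nat.gcd_pos_of_pos_left m hn
  have hmuln : n / g * g = n := Nat.div_mul_cancel hgdvdn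
  constructor
  · rintro ⟨X, hX⟩
    refine ⟨hgpos, hgdvdn, ?_⟩
    by_contra hne
    obtain ⟨p, hp, hpdvd⟩ := Nat.exists_prime_and_dvd hne
    have hpg : p ∣ g := hpdvd.trans (Nat.gcd_dvd_left _ _)
    have hpng : p ∣ n / g := hpdvd.trans (Nat.gcd_dvd_right _ _)
    have hpm : p ∣ m := hpg.trans hgm
    set a := n.factorization p with ha
    have hpan : p ^ a ∣ n := Nat.ordProj_dvd n p
    have hpZ : Prime (p : ℤ) := Nat.prime_iff_prime_int.mp hp
    have hnotdvd : ¬ (p : ℤ) ∣ ((m : ℤ) * X - 1) := by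
      intro h
      have h1 : (p : ℤ) ∣ (m : ℤ) * X := Dvd.dvd.mul_right (Int.natCast_dvd_natCast.mpr hpm) X
      have : (p : ℤ) ∣ 1 := by
        have := dvd_sub h1 h
        simpa using this
      exact hp.one_lt.ne' (by exact_mod_cast Int.eq_one_of_dvd_one (by positivity) this)
    have hcop : IsCoprime ((p : ℤ) ^ a) ((m : ℤ) * X - 1) :=
      ((hpZ.coprime_iff_not_dvd).mpr hnotdvd).pow_left
    have hdvd : ((p : ℤ) ^ a) ∣ (m : ℤ) * ((m : ℤ) * X - 1) :=
      dvd_trans (by exact_mod_cast Int.natCast_dvd_natCast.mpr hpan) hX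
    have hpam : p ^ a ∣ m := by
      have := hcop.dvd_of_dvd_mul_right hdvd
      exact_mod_cast this
    have hpag : p ^ a ∣ g := Nat.dvd_gcd hpan hpam
    have hcontra : p ^ (a + 1) ∣ n := by
      have h := mul_dvd_mul hpag hpng
      rw [pow_succ]
      rwa [Nat.mul_comm g, hmuln] at h
    have := (Nat.Prime.pow_dvd_iff_le_factorization hp hn.ne').mp hcontra
    omega
  · rintro ⟨-, -, hcop⟩
    set n' := n / g with hn'
    have hcmn' : Nat.Coprime m n' := by
      obtain ⟨m', hm'⟩ := hgm
      obtain ⟨k, hk⟩ := hgdvdn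
      have hkn' : k = n' := by
        rw [hn', hk, Nat.mul_div_cancel_left _ hgpos]
      rw [hkn'] at hk
      have hgcd : g * Nat.gcd n' m' = g * 1 := by
        rw [← Nat.gcd_mul_left, ← hk, ← hm', hg, Nat.mul_one]
      have h1 : Nat.gcd n' m' = 1 := Nat.eq_of_mul_eq_mul_left hgpos hgcd
      rw [hm']
      exact Nat.Coprime.mul hcop (Nat.coprime_comm.mp h1)
    have hZcop : IsCoprime (m : ℤ) (n' : ℤ) := Nat.isCoprime_iff_coprime.mpr hcmn'
    obtain ⟨u, v, huv⟩ := hZcop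
    refine ⟨u, ?_⟩
    have h1 : (m : ℤ) * u - 1 = -(v * n') := by linarith
    have h2 : (n : ℤ) = n' * g := by exact_mod_cast hmuln.symm
    rw [h1, h2]
    have h3 : (m : ℤ) * -(v * (n' : ℤ)) = (n' : ℤ) * (-v * m) := by ring
    rw [h3]
    exact mul_dvd_mul_left _ (Dvd.dvd.mul_left (Int.natCast_dvd_natCast.mpr hgm) (-v))

open Finset in
open Classical in
theorem rho_eq_sum_totient_unitaryDivisors (n : ℕ) (hn : 0 < n) :
    rho n = ∑ d ∈ n.divisors.filter (fun d => UnitaryDivisor d n), Nat.totient d := by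
  haveI : NeZero n := ⟨hn.ne'⟩
  classical
  set t := n.divisors.filter (fun d => UnitaryDivisor d n) with ht
  have h1 : rho n
      = #(Finset.filter (fun m : ℕ => IsRegularElem (m : ZMod n)) (Finset.range n)) := by
    rw [rho, Nat.card_eq_fintype_card, Fintype.card_subtype]
    apply Finset.card_bij (fun m _ => m.val)
    · intro m hm
      simp only [Finset.mem_filter, Finset.mem_univ, true_and] at hm
      simp only [Finset.mem_filter, Finset.mem_range, ZMod.val_lt, true_and]
      rwa [ZMod.natCast_val, ZMod.cast_id]
    · intro a _ b _ h
      exact ZMod.val_injective n h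
    · intro k hk
      simp only [Finset.mem_filter, Finset.mem_range] at hk
      refine ⟨(k : ZMod n), ?_, ZMod.val_cast_of_lt hk.1⟩
      simp only [Finset.mem_filter, Finset.mem_univ, true_and]
      exact hk.2
  have h2 : Finset.filter (fun m : ℕ => IsRegularElem (m : ZMod n)) (Finset.range n)
      = {m ∈ Finset.range n | UnitaryDivisor (n.gcd m) n} :=
    Finset.filter_congr (fun m _ => by rw [isRegular_iff_unitary n hn m])
  have h3 : #{m ∈ Finset.range n | UnitaryDivisor (n.gcd m) n}
      = ∑ d ∈ t, #{m ∈ {m ∈ Finset.range n | UnitaryDivisor (n.gcd m) n} | n.gcd m = d} := by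
    apply Finset.card_eq_sum_card_fiberwise
    intro m hm
    simp only [Finset.mem_coe, Finset.mem_filter, Finset.mem_range] at hm
    simp only [Finset.mem_coe, ht, Finset.mem_filter, Nat.mem_divisors]
    exact ⟨⟨Nat.gcd_dvd_left n m, hn.ne'⟩, hm.2⟩
  have h4 : ∀ d ∈ t, #{m ∈ {m ∈ Finset.range n | UnitaryDivisor (n.gcd m) n} | n.gcd m = d}
      = Nat.totient (n / d) := by
    intro d hd
    simp only [ht, Finset.mem_filter, Nat.mem_divisors] at hd
    rw [Finset.filter_filter]
    rw [Nat.totient_div_of_dvd hd.1.1]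
    congr 1
    apply Finset.filter_congr
    intro m _
    constructor
    · rintro ⟨-, h⟩; exact h
    · intro h; exact ⟨h ▸ hd.2, h⟩
  have h5 : ∑ d ∈ t, Nat.totient (n / d) = ∑ d ∈ t, Nat.totient d := by
    have hmem : ∀ d ∈ t, n / d ∈ t := by
      intro d hd
      simp only [ht, Finset.mem_filter, Nat.mem_divisors] at hd ⊢
      obtain ⟨⟨hdn, -⟩, hdpos, -, hcop⟩ := hd
      have hdd : n / (n / d) = d := Nat.div_div_self hdn hn.ne'
      refine ⟨⟨Nat.div_dvd_of_dvd hdn, hn.ne'⟩, ?_, Nat.div_dvd_of_dvd hdn, ?_⟩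
      · exact Nat.div_pos (Nat.le_of_dvd hn hdn) hdpos
      · rw [hdd, Nat.gcd_comm]; exact hcop
    refine Finset.sum_nbij' (fun d => n / d) (fun d => n / d) hmem hmem ?_ ?_ ?_
    · intro d hd
      simp only [ht, Finset.mem_filter, Nat.mem_divisors] at hd
      exact Nat.div_div_self hd.1.1 hn.ne'
    · intro d hd
      simp only [ht, Finset.mem_filter, Nat.mem_divisors] at hd
      exact Nat.div_div_self hd.1.1 hn.ne'
    · intro d hd; rfl
  rw [h1, h2, h3, Finset.sum_congr rfl h4, h5]
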